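/- Let x, y be real numbers such that 1, x, y are linearly independent over ℚ (i.e., the only integers a, b, c with a·x + b·y + c = 0 are a = b = c = 0). Then the set of natural numbers C with {Cx} + {Cy} > 1 is infinite. -/

import Mathlib

open Set

/-- The subgroup generated by 1 and an irrational θ is dense. -/
lemma dense_one_irrational (θ : ℝ) (hθ : Irrational θ) :
    Dense ((AddSubgroup.closure {1, θ} : AddSubgroup ℝ) : Set ℝ) := by
  rcases AddSubgroup.dense_or_cyclic (AddSubgroup.closure {1, θ}) with h | ⟨a, ha⟩
  · exact h
  · exfalso
    have h1 : (1:ℝ) ∈ AddSubgroup.closure ({1, θ} : Set ℝ) :=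
      AddSubgroup.subset_closure (by simp)
    have h2 : θ ∈ AddSubgroup.closure ({1, θ} : Set ℝ) :=
      AddSubgroup.subset_closure (by simp)
    rw [ha, AddSubgroup.mem_closure_singleton] at h1 h2
    obtain ⟨m, hm⟩ := h1
    obtain ⟨n, hn⟩ := h2
    have hm0 : m ≠ 0 := by
      rintro rfl; simp at hm
    have : (m : ℝ) * θ = (n : ℝ) := by
      rw [← zsmul_eq_mul, ← hn, smul_comm, hm, zsmul_eq_mul, mul_one]
    exact (hθ.intCast_mul hm0).ne_int n this

lemma exists_small_fract (θ : ℝ) (hθ : Irrational θ) {ε : ℝ} (hε : 0 < ε) :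
    ∃ n : ℕ, 0 < n ∧ (Int.fract (n * θ) < ε ∨ 1 - ε < Int.fract (n * θ)) := by
  set ε' := min ε 1 with hε'
  have hε'0 : 0 < ε' := lt_min hε one_pos
  have hd := dense_one_irrational θ hθ
  obtain ⟨g, hgS, hgo⟩ := hd.exists_mem_open isOpen_Ioo (Set.nonempty_Ioo.2 (by linarith : (0:ℝ) < ε'))
  obtain ⟨p, q, hpq⟩ := AddSubgroup.mem_closure_pair.mp hgS
  simp only [zsmul_eq_mul, mul_one] at hpq
  -- g = p + q * θ, 0 < g < ε'
  obtain ⟨hg0, hg1⟩ := hgo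
  have hfg : Int.fract g = g := Int.fract_eq_self.mpr ⟨le_of_lt hg0, lt_of_lt_of_le hg1 (min_le_right _ _)⟩
  have hq0 : q ≠ 0 := by
    rintro rfl
    rw [← hpq] at hg0 hg1
    simp at hg0 hg1
    have h1 : (1:ℝ) ≤ (p:ℝ) := by exact_mod_cast hg0
    have h2 := min_le_right ε 1
    linarith
  rcases lt_or_gt_of_ne hq0 with hq | hq
  · -- q < 0 : use n = (-q).toNat, fract(nθ) = fract(p - g) = 1 - g
    refine ⟨(-q).toNat, by omega, Or.inr ?_⟩
    have hcast : ((((-q).toNat : ℕ)) : ℝ) = -(q:ℝ) := by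
      have : ((-q).toNat : ℤ) = -q := Int.toNat_of_nonneg (by omega)
      exact_mod_cast congrArg (Int.cast : ℤ → ℝ) this
    have : (((-q).toNat : ℕ) : ℝ) * θ = (p : ℝ) + (-g) := by
      rw [hcast]; rw [← hpq]; ring
    rw [this, Int.fract_intCast_add, Int.fract_neg (by rw [hfg]; exact ne_of_gt hg0), hfg]
    have : ε' ≤ ε := min_le_left _ _
    linarith
  · refine ⟨q.toNat, by omega, Or.inl ?_⟩
    have hcast : ((q.toNat : ℕ) : ℝ) = (q:ℝ) := by
      have : (q.toNat : ℤ) = q := Int.toNat_of_nonneg (by omega)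
      exact_mod_cast congrArg (Int.cast : ℤ → ℝ) this
    have : ((q.toNat : ℕ) : ℝ) * θ = ((-p : ℤ) : ℝ) + g := by
      rw [hcast, ← hpq]; push_cast; ring
    rw [this, Int.fract_intCast_add, hfg]
    have : ε' ≤ ε := min_le_left _ _
    linarith

lemma exists_mul_fract_mem {δ a b : ℝ} (hδ : 0 < δ) (hab : δ < b - a) (ha : 0 ≤ a) (hb : b ≤ 1)
    (N : ℕ) : ∃ k : ℕ, N ≤ k ∧ 0 < k ∧ a < Int.fract (k * δ) ∧ Int.fract (k * δ) < b := by
  set k : ℤ := ⌊(a + N) / δ⌋ + 1 with hk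
  have hk0 : 0 < k := by
    have : (0:ℤ) ≤ ⌊(a + N) / δ⌋ := Int.floor_nonneg.mpr (div_nonneg (by positivity) hδ.le)
    omega
  have hkgt : a + N < (k:ℝ) * δ := by
    have h1 : (a + N) / δ < k := by
      have := Int.lt_floor_add_one ((a + N) / δ)
      rw [hk]
      push_cast
      linarith
    calc a + N = ((a + N) / δ) * δ := by field_simp
    _ < (k:ℝ) * δ := by apply mul_lt_mul_of_pos_right h1 hδ
  have hklt : (k:ℝ) * δ < b + N := by
    have h1 : (k:ℝ) ≤ (a + N) / δ + 1 := by
      have := Int.floor_le ((a + N) / δ)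
      rw [hk]
      push_cast
      linarith
    have h2 : (k:ℝ) * δ ≤ ((a + N) / δ + 1) * δ := mul_le_mul_of_nonneg_right h1 hδ.le
    have h3 : ((a + N) / δ + 1) * δ = (a + N) + δ := by field_simp
    linarith
  have hfloor : ⌊(k:ℝ) * δ⌋ = (N:ℤ) := by
    apply Int.floor_eq_iff.mpr
    constructor
    · push_cast; linarith
    · push_cast; linarith
  have hfract : Int.fract ((k:ℝ) * δ) = (k:ℝ) * δ - N := by
    rw [Int.fract, hfloor]; push_cast; ring
  have hδ1 : δ ≤ 1 := by linarith
  have hkN : (N:ℝ) < (k:ℝ) := by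
    have h1 : (N:ℝ) * δ ≤ (N:ℝ) := by nlinarith [Nat.cast_nonneg (α := ℝ) N]
    have h2 : (N:ℝ) * δ < (k:ℝ) * δ := by linarith
    exact lt_of_mul_lt_mul_right h2 hδ.le
  refine ⟨k.toNat, ?_, ?_, ?_, ?_⟩
  · have : (N:ℤ) < k := by exact_mod_cast hkN
    omega
  · omega
  · have hc : ((k.toNat : ℕ) : ℝ) = (k:ℝ) := by
      have : (k.toNat : ℤ) = k := Int.toNat_of_nonneg hk0.le
      exact_mod_cast congrArg (Int.cast : ℤ → ℝ) this
    rw [hc, hfract]; linarith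
  · have hc : ((k.toNat : ℕ) : ℝ) = (k:ℝ) := by
      have : (k.toNat : ℤ) = k := Int.toNat_of_nonneg hk0.le
      exact_mod_cast congrArg (Int.cast : ℤ → ℝ) this
    rw [hc, hfract]; linarith

lemma exists_fract_nat_mem (θ : ℝ) (hθ : Irrational θ) {a b : ℝ} (ha : 0 ≤ a) (hab : a < b)
    (hb : b ≤ 1) (N : ℕ) :
    ∃ n : ℕ, N ≤ n ∧ a < Int.fract (n * θ) ∧ Int.fract (n * θ) < b := by
  obtain ⟨n₀, hn₀pos, hcase⟩ := exists_small_fract θ hθ (by linarith : (0:ℝ) < b - a)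
  have hn₀θ : Irrational ((n₀ : ℝ) * θ) := hθ.natCast_mul (by omega)
  have hfirr : Irrational (Int.fract ((n₀:ℝ) * θ)) := by
    rw [Int.fract]
    exact hn₀θ.sub_intCast _
  have hfpos : 0 < Int.fract ((n₀:ℝ) * θ) := by
    rcases eq_or_lt_of_le (Int.fract_nonneg ((n₀:ℝ)*θ)) with h | h
    · exact absurd (h.symm) (by simpa using hfirr.ne_rat 0)
    · exact h
  have hflt : Int.fract ((n₀:ℝ) * θ) < 1 := Int.fract_lt_one _
  rcases hcase with hsm | hlg
  · -- fract(n₀θ) small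
    set δ := Int.fract ((n₀:ℝ) * θ) with hδdef
    obtain ⟨k, hkN, hkpos, hka, hkb⟩ := exists_mul_fract_mem hfpos (by linarith) ha hb N
    refine ⟨k * n₀, ?_, ?_, ?_⟩
    · calc N ≤ k := hkN
      _ ≤ k * n₀ := Nat.le_mul_of_pos_right k hn₀pos
    · have heq : ((k * n₀ : ℕ) : ℝ) * θ = ((k * ⌊(n₀:ℝ)*θ⌋ : ℤ) : ℝ) + (k:ℝ) * δ := by
        push_cast
        rw [hδdef, Int.fract]
        ring
      rw [heq, Int.fract_intCast_add]; exact hka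
    · have heq : ((k * n₀ : ℕ) : ℝ) * θ = ((k * ⌊(n₀:ℝ)*θ⌋ : ℤ) : ℝ) + (k:ℝ) * δ := by
        push_cast
        rw [hδdef, Int.fract]
        ring
      rw [heq, Int.fract_intCast_add]; exact hkb
  · -- fract(n₀θ) close to 1
    set δ' := 1 - Int.fract ((n₀:ℝ) * θ) with hδ'def
    have hδ'pos : 0 < δ' := by simp only [hδ'def]; linarith
    have hδ'lt : δ' < b - a := by simp only [hδ'def]; linarith
    have hδ'irr : Irrational δ' := by
      have := hfirr.neg.ratCast_add 1
      simpa [hδ'def, sub_eq_add_neg] using this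
    obtain ⟨k, hkN, hkpos, hka, hkb⟩ := exists_mul_fract_mem hδ'pos
      (by linarith : δ' < (1 - a) - (1 - b)) (by linarith) (by linarith) N
    have hkδ'irr : Irrational ((k:ℝ) * δ') := hδ'irr.natCast_mul (by omega)
    have hfk0 : Int.fract ((k:ℝ) * δ') ≠ 0 := by
      intro h
      have : Irrational (Int.fract ((k:ℝ) * δ')) := by
        rw [Int.fract]; exact hkδ'irr.sub_intCast _
      rw [h] at this
      exact this.ne_rat 0 (by norm_num)
    refine ⟨k * n₀, ?_, ?_, ?_⟩
    · calc N ≤ k := hkN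
      _ ≤ k * n₀ := Nat.le_mul_of_pos_right k hn₀pos
    · have heq : ((k * n₀ : ℕ) : ℝ) * θ = ((k * ⌊(n₀:ℝ)*θ⌋ + k : ℤ) : ℝ) + (-((k:ℝ) * δ')) := by
        push_cast
        rw [hδ'def, Int.fract]
        ring
      rw [heq, Int.fract_intCast_add, Int.fract_neg hfk0]
      linarith
    · have heq : ((k * n₀ : ℕ) : ℝ) * θ = ((k * ⌊(n₀:ℝ)*θ⌋ + k : ℤ) : ℝ) + (-((k:ℝ) * δ')) := by
        push_cast
        rw [hδ'def, Int.fract]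
        ring
      rw [heq, Int.fract_intCast_add, Int.fract_neg hfk0]
      linarith

lemma fract_add_eq' {u v : ℝ} (h : Int.fract u + Int.fract v < 1) :
    Int.fract (u + v) = Int.fract u + Int.fract v := by
  have h0 : 0 ≤ Int.fract u + Int.fract v :=
    add_nonneg (Int.fract_nonneg u) (Int.fract_nonneg v)
  have heq : u + v = ((⌊u⌋ + ⌊v⌋ : ℤ) : ℝ) + (Int.fract u + Int.fract v) := by
    rw [Int.fract, Int.fract]; push_cast; ring
  rw [heq, Int.fract_intCast_add, Int.fract_eq_self.mpr ⟨h0, h⟩]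

theorem infinite_fract_sum_gt_one (x y : ℝ)
    (hindep : ∀ a b c : ℤ, (a : ℝ) * x + (b : ℝ) * y + (c : ℝ) = 0 → a = 0 ∧ b = 0 ∧ c = 0) :
    {C : ℕ | Int.fract (C * x) + Int.fract (C * y) > 1}.Infinite := by
  have hdr : ∀ r : ℚ, (r.den : ℝ) * (r : ℝ) = (r.num : ℝ) := by
    intro r
    have hden : (r.den : ℝ) ≠ 0 := Nat.cast_ne_zero.mpr r.den_nz
    rw [Rat.cast_def]
    field_simp
  have hx : Irrational x := by
    rintro ⟨r, hr⟩
    have h := hindep r.den 0 (-r.num) ?_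
    · exact absurd h.1 (by exact_mod_cast r.den_nz)
    · rw [← hr]
      push_cast
      linarith [hdr r]
  have hy : Irrational y := by
    rintro ⟨r, hr⟩
    have h := hindep 0 r.den (-r.num) ?_
    · exact absurd h.2.1 (by exact_mod_cast r.den_nz)
    · rw [← hr]
      push_cast
      linarith [hdr r]
  have hxy : Irrational (x + y) := by
    rintro ⟨r, hr⟩
    have h := hindep r.den r.den (-r.num) ?_
    · exact absurd h.1 (by exact_mod_cast r.den_nz)
    · have h2 : (r.den : ℝ) * (x + y) = (r.num : ℝ) := by rw [← hr]; exact hdr r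
      rw [mul_add] at h2
      push_cast
      linarith [h2]
  by_contra hfin
  rw [Set.not_infinite] at hfin
  obtain ⟨N, hN⟩ := hfin.bddAbove
  set M := N + 1 with hM
  have key : ∀ C : ℕ, M ≤ C → Int.fract ((C:ℝ) * x) + Int.fract ((C:ℝ) * y) < 1 := by
    intro C hC
    have hnotmem : C ∉ {C : ℕ | Int.fract ((C:ℝ) * x) + Int.fract ((C:ℝ) * y) > 1} := by
      intro hmem
      have := hN hmem
      omega
    simp only [Set.mem_setOf_eq, not_lt, gt_iff_lt] at hnotmem
    rcases lt_or_eq_of_le hnotmem with h | h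
    · exact h
    · exfalso
      have hC0 : C ≠ 0 := by omega
      have hCxy : Irrational ((C:ℝ) * (x + y)) := hxy.natCast_mul hC0
      apply hCxy.ne_int (⌊(C:ℝ) * x⌋ + ⌊(C:ℝ) * y⌋ + 1)
      have h1 : (C:ℝ) * x = ⌊(C:ℝ) * x⌋ + Int.fract ((C:ℝ) * x) := (Int.floor_add_fract _).symm
      have h2 : (C:ℝ) * y = ⌊(C:ℝ) * y⌋ + Int.fract ((C:ℝ) * y) := (Int.floor_add_fract _).symm
      push_cast
      nlinarith [h1, h2]
  -- Step 1: choose C' with fract(C'y) ∈ (1/2, 1)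
  obtain ⟨C', hC'M, hC'a, hC'b⟩ := exists_fract_nat_mem y hy (by norm_num : (0:ℝ) ≤ 1/2)
    (by norm_num : (1:ℝ)/2 < 1) le_rfl M
  set α := Int.fract ((C':ℝ) * y) with hα
  set β := Int.fract ((C':ℝ) * x) with hβ
  have hβ0 : 0 ≤ β := Int.fract_nonneg _
  have hsum' : β + α < 1 := key C' hC'M
  -- Step 2: choose C with fract(Cx) ∈ (α, 1-β)
  obtain ⟨C, hCM, hCa, hCb⟩ := exists_fract_nat_mem x hx
    (le_of_lt (lt_trans (by norm_num) hC'a) : (0:ℝ) ≤ α)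
    (by linarith : α < 1 - β) (by linarith : 1 - β ≤ 1) M
  have hCy : Int.fract ((C:ℝ) * y) < 1 - α := by
    have := key C hCM
    linarith
  -- Step 3: contradiction at C + C'
  have hkey2 := key (C + C') (by omega)
  have hxadd : Int.fract (((C + C' : ℕ):ℝ) * x) = Int.fract ((C:ℝ) * x) + β := by
    have heq : ((C + C' : ℕ):ℝ) * x = (C:ℝ) * x + (C':ℝ) * x := by push_cast; ring
    rw [heq, fract_add_eq' (by rw [← hβ]; linarith)]
  have hyadd : Int.fract (((C + C' : ℕ):ℝ) * y) = Int.fract ((C:ℝ) * y) + α := by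
    have heq : ((C + C' : ℕ):ℝ) * y = (C:ℝ) * y + (C':ℝ) * y := by push_cast; ring
    rw [heq, fract_add_eq' (by rw [← hα]; linarith)]
  rw [hxadd, hyadd] at hkey2
  have h1 : 0 ≤ Int.fract ((C:ℝ) * y) := Int.fract_nonneg _
  linarith
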